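/- Let φ be the piecewise density with parameter b ≥ 2 and Φ its CDF, and let H̄* be defined by convolution of a CDF H with Φ (H̄*(s) = 1 − (H ∗ Φ)(s)). Then for any s ≥ 0 and any increment 0 ≤ h ≤ 1/b³ (in particular for consecutive grid points v_{j+1} = v_j + 1/b³), H̄*(s + 1/b³)/H̄*(s) ≥ e^{−1/b²} ≥ 1/2, provided H̄*(s) > 0. -/

import Mathlib

open Real MeasureTheory

/-- The piecewise density φ with parameter b. -/
noncomputable def phi (b : ℤ) (s : ℝ) : ℝ :=
  if s ≤ 0 then 0
  else if s ≤ 1 / b then (2 / 3) * (b : ℝ) ^ 2 * s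
  else (2 / 3) * Real.exp 1 * (b : ℝ) * Real.exp (-(b : ℝ) * s)

/-- The CDF of φ. -/
noncomputable def Phi (b : ℤ) (s : ℝ) : ℝ := ∫ s' in Set.Iic s, phi b s'

/-- The convolved tail H̄*(s) = ∫ (1 − Φ(s − s')) dμ(s'). -/
noncomputable def Hbar (b : ℤ) (μ : Measure ℝ) (s : ℝ) : ℝ :=
  ∫ s', (1 - Phi b (s - s')) ∂μ

section Aux

variable {b : ℤ}

lemma phi_nonneg (hb : 2 ≤ b) (s : ℝ) : 0 ≤ phi b s := by
  have hB : (2 : ℝ) ≤ (b : ℝ) := by exact_mod_cast hb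
  unfold phi
  split_ifs with h1 h2
  · exact le_rfl
  · push_neg at h1
    positivity
  · positivity

lemma phi_measurable (b : ℤ) : Measurable (phi b) := by
  unfold phi
  apply Measurable.ite (measurableSet_Iic (a := (0:ℝ))) measurable_const
  apply Measurable.ite (measurableSet_Iic (a := (1 / (b:ℝ))))
  · exact (measurable_id.const_mul _)
  · exact (measurable_id.const_mul (-(b:ℝ))).exp.const_mul _

lemma phi_eqOn_Iic (b : ℤ) : Set.EqOn (phi b) 0 (Set.Iic 0) := by
  intro s hs; simp only [Set.mem_Iic] at hs; simp [phi, hs]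

lemma phi_eqOn_Ioc (hb : 2 ≤ b) :
    Set.EqOn (phi b) (fun s => (2 / 3) * (b : ℝ) ^ 2 * s) (Set.Ioc 0 (1 / (b:ℝ))) := by
  intro s hs
  obtain ⟨h0, h1⟩ := hs
  unfold phi
  rw [if_neg (not_le.2 h0), if_pos h1]

lemma phi_eqOn_Ioi (hb : 2 ≤ b) :
    Set.EqOn (phi b) (fun s => (2 / 3) * Real.exp 1 * (b : ℝ) * Real.exp (-(b : ℝ) * s))
      (Set.Ioi (1 / (b:ℝ))) := by
  have hB : (2 : ℝ) ≤ (b : ℝ) := by exact_mod_cast hb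
  intro s hs
  simp only [Set.mem_Ioi] at hs
  have h0 : ¬ s ≤ 0 := by
    have : (0:ℝ) < 1 / (b:ℝ) := by positivity
    push_neg; linarith
  unfold phi
  rw [if_neg h0, if_neg (not_le.2 hs)]

lemma phi_integrableOn_Iic (hb : 2 ≤ b) : IntegrableOn (phi b) (Set.Iic 0) := by
  rw [integrableOn_congr_fun (phi_eqOn_Iic b) measurableSet_Iic]
  exact integrableOn_zero

lemma phi_integrableOn_Ioc (hb : 2 ≤ b) : IntegrableOn (phi b) (Set.Ioc 0 (1 / (b:ℝ))) := by
  rw [integrableOn_congr_fun (phi_eqOn_Ioc hb) measurableSet_Ioc]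
  exact (continuous_const.mul continuous_id).integrableOn_Ioc

lemma phi_integrableOn_Ioi (hb : 2 ≤ b) : IntegrableOn (phi b) (Set.Ioi (1 / (b:ℝ))) := by
  have hB : (2 : ℝ) ≤ (b : ℝ) := by exact_mod_cast hb
  rw [integrableOn_congr_fun (phi_eqOn_Ioi hb) measurableSet_Ioi]
  exact (exp_neg_integrableOn_Ioi _ (by linarith)).const_mul _

lemma phi_integrableOn_Iic' (hb : 2 ≤ b) : IntegrableOn (phi b) (Set.Iic (1 / (b:ℝ))) := by
  have hB : (2 : ℝ) ≤ (b : ℝ) := by exact_mod_cast hb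
  have h0 : (0:ℝ) ≤ 1 / (b:ℝ) := by positivity
  rw [← Set.Iic_union_Ioc_eq_Iic h0]
  exact (phi_integrableOn_Iic hb).union (phi_integrableOn_Ioc hb)

lemma phi_integrable (hb : 2 ≤ b) : Integrable (phi b) := by
  rw [← integrableOn_univ, ← Set.Iic_union_Ioi (a := (1 / (b:ℝ)))]
  exact (phi_integrableOn_Iic' hb).union (phi_integrableOn_Ioi hb)

lemma integral_exp_neg_mul_Ioi {B : ℝ} (hB : 0 < B) (a : ℝ) :
    ∫ x in Set.Ioi a, Real.exp (-B * x) = Real.exp (-B * a) / B := by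
  have hderiv : ∀ x ∈ Set.Ici a,
      HasDerivAt (fun x => -(Real.exp (-B * x) / B)) (Real.exp (-B * x)) x := by
    intro x _
    have h1 : HasDerivAt (fun x : ℝ => -B * x) (-B) x := by
      simpa using (hasDerivAt_id x).const_mul (-B)
    have h2 : HasDerivAt (fun x => -(Real.exp (-B * x) / B)) (-(Real.exp (-B * x) * -B / B)) x := ((h1.exp).div_const B).neg
    convert h2 using 1
    field_simp
  have htend : Filter.Tendsto (fun x => -(Real.exp (-B * x) / B)) Filter.atTop (nhds 0) := by
    have : Filter.Tendsto (fun x : ℝ => Real.exp (-B * x)) Filter.atTop (nhds 0) :=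
      Real.tendsto_exp_atBot.comp (Filter.tendsto_id.const_mul_atTop_of_neg (by linarith))
    simpa using (this.div_const B).neg
  have := integral_Ioi_of_hasDerivAt_of_tendsto' hderiv
    (exp_neg_integrableOn_Ioi a hB) htend
  rw [this]
  ring

lemma phi_integral_eq_one (hb : 2 ≤ b) : ∫ s, phi b s = 1 := by
  have hB : (2 : ℝ) ≤ (b : ℝ) := by exact_mod_cast hb
  have hB0 : (0:ℝ) < (b:ℝ) := by linarith
  have h0 : (0:ℝ) ≤ 1 / (b:ℝ) := by positivity
  have hIic0 : ∫ s in Set.Iic (0:ℝ), phi b s = 0 := by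
    rw [setIntegral_congr_fun measurableSet_Iic (phi_eqOn_Iic b)]
    simp
  have hIoc : ∫ s in Set.Ioc (0:ℝ) (1 / (b:ℝ)), phi b s = 1 / 3 := by
    rw [setIntegral_congr_fun measurableSet_Ioc (phi_eqOn_Ioc hb)]
    rw [← intervalIntegral.integral_of_le h0]
    rw [intervalIntegral.integral_const_mul, integral_id]
    field_simp
    ring
  have hIoi : ∫ s in Set.Ioi (1 / (b:ℝ)), phi b s = 2 / 3 := by
    rw [setIntegral_congr_fun measurableSet_Ioi (phi_eqOn_Ioi hb)]
    rw [MeasureTheory.integral_const_mul, integral_exp_neg_mul_Ioi hB0]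
    have : -(b:ℝ) * (1 / (b:ℝ)) = -1 := by field_simp
    rw [this, Real.exp_neg]
    have he := Real.exp_ne_zero 1
    field_simp
  have hsplit : ∫ s, phi b s =
      (∫ s in Set.Iic (1 / (b:ℝ)), phi b s) + ∫ s in Set.Ioi (1 / (b:ℝ)), phi b s :=
    (intervalIntegral.integral_Iic_add_Ioi (phi_integrableOn_Iic' hb) (phi_integrableOn_Ioi hb)).symm
  have hsplit2 : ∫ s in Set.Iic (1 / (b:ℝ)), phi b s =
      (∫ s in Set.Iic (0:ℝ), phi b s) + ∫ s in Set.Ioc (0:ℝ) (1 / (b:ℝ)), phi b s := by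
    rw [← setIntegral_union (Set.Iic_disjoint_Ioc le_rfl) measurableSet_Ioc
      (phi_integrableOn_Iic hb) (phi_integrableOn_Ioc hb), Set.Iic_union_Ioc_eq_Iic h0]
  rw [hsplit, hsplit2, hIic0, hIoc, hIoi]
  norm_num

/-- Pointwise density ratio: φ(t+h) ≥ e^{-bh} φ(t). -/
lemma phi_ratio (hb : 2 ≤ b) {t h : ℝ} (hh : 0 ≤ h) :
    Real.exp (-(b:ℝ) * h) * phi b t ≤ phi b (t + h) := by
  have hB : (2 : ℝ) ≤ (b : ℝ) := by exact_mod_cast hb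
  have hB0 : (0:ℝ) < (b:ℝ) := by linarith
  have hexp1 : Real.exp (-(b:ℝ) * h) ≤ 1 := Real.exp_le_one_iff.2 (by nlinarith)
  have hexp0 : 0 < Real.exp (-(b:ℝ) * h) := Real.exp_pos _
  by_cases ht : t ≤ 0
  · have : phi b t = 0 := by simp [phi, ht]
    rw [this, mul_zero]
    exact phi_nonneg hb _
  · push_neg at ht
    have hth : ¬ (t + h ≤ 0) := by push_neg; linarith
    by_cases ht2 : t ≤ 1 / (b:ℝ)
    · have hphit : phi b t = (2 / 3) * (b : ℝ) ^ 2 * t := by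
        unfold phi; rw [if_neg (not_le.2 ht), if_pos ht2]
      by_cases hth2 : t + h ≤ 1 / (b:ℝ)
      · have : phi b (t + h) = (2 / 3) * (b : ℝ) ^ 2 * (t + h) := by
          unfold phi; rw [if_neg hth, if_pos hth2]
        rw [this, hphit]
        calc Real.exp (-(b:ℝ) * h) * (2 / 3 * (b:ℝ) ^ 2 * t)
            ≤ 1 * (2 / 3 * (b:ℝ) ^ 2 * t) :=
              mul_le_mul_of_nonneg_right hexp1 (by positivity)
          _ = 2 / 3 * (b:ℝ) ^ 2 * t := one_mul _
          _ ≤ 2 / 3 * (b:ℝ) ^ 2 * (t + h) := by nlinarith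
      · have hphith : phi b (t + h) =
            (2 / 3) * Real.exp 1 * (b : ℝ) * Real.exp (-(b : ℝ) * (t + h)) := by
          unfold phi; rw [if_neg hth, if_neg hth2]
        rw [hphith, hphit]
        have hkey : (b:ℝ) * t ≤ Real.exp (1 - (b:ℝ) * t) := by
          have h1 : (b:ℝ) * t ≤ 1 := by
            have h := mul_le_mul_of_nonneg_left ht2 hB0.le
            rw [mul_one_div, div_self hB0.ne'] at h
            exact h
          have h2 : (1:ℝ) ≤ Real.exp (1 - (b:ℝ) * t) := Real.one_le_exp (by linarith)
          linarith
        have heq : Real.exp 1 * Real.exp (-(b:ℝ) * (t + h)) =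
            Real.exp (-(b:ℝ) * h) * Real.exp (1 - (b:ℝ) * t) := by
          rw [← Real.exp_add, ← Real.exp_add]
          ring_nf
        calc Real.exp (-(b:ℝ) * h) * ((2 / 3) * (b : ℝ) ^ 2 * t)
            = Real.exp (-(b:ℝ) * h) * ((2 / 3) * (b : ℝ)) * ((b:ℝ) * t) := by ring
          _ ≤ Real.exp (-(b:ℝ) * h) * ((2 / 3) * (b : ℝ)) * Real.exp (1 - (b:ℝ) * t) := by
              apply mul_le_mul_of_nonneg_left hkey
              positivity
          _ = (2 / 3) * (Real.exp (-(b:ℝ) * h) * Real.exp (1 - (b:ℝ) * t)) * (b:ℝ) := by ring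
          _ = 2 / 3 * Real.exp 1 * (b:ℝ) * Real.exp (-(b:ℝ) * (t + h)) := by rw [← heq]; ring
    · have hth2 : ¬ (t + h ≤ 1 / (b:ℝ)) := by push_neg at ht2 ⊢; linarith
      have h1 : phi b t = (2 / 3) * Real.exp 1 * (b : ℝ) * Real.exp (-(b : ℝ) * t) := by
        unfold phi; rw [if_neg (not_le.2 ht), if_neg ht2]
      have h2 : phi b (t + h) =
          (2 / 3) * Real.exp 1 * (b : ℝ) * Real.exp (-(b : ℝ) * (t + h)) := by
        unfold phi; rw [if_neg hth, if_neg hth2]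
      rw [h1, h2]
      have : Real.exp (-(b:ℝ) * h) * Real.exp (-(b:ℝ) * t) = Real.exp (-(b:ℝ) * (t + h)) := by
        rw [← Real.exp_add]; ring_nf
      apply le_of_eq
      rw [← this]
      ring

lemma one_sub_Phi_eq (hb : 2 ≤ b) (t : ℝ) :
    1 - Phi b t = ∫ s in Set.Ioi t, phi b s := by
  have h := intervalIntegral.integral_Iic_add_Ioi (b := t) ((phi_integrable hb).integrableOn)
    ((phi_integrable hb).integrableOn)
  rw [phi_integral_eq_one hb] at h
  unfold Phi
  linarith

lemma Phi_nonneg (hb : 2 ≤ b) (t : ℝ) : 0 ≤ Phi b t :=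
  setIntegral_nonneg measurableSet_Iic (fun s _ => phi_nonneg hb s)

lemma Phi_le_one (hb : 2 ≤ b) (t : ℝ) : Phi b t ≤ 1 := by
  have h := one_sub_Phi_eq hb t
  have : 0 ≤ ∫ s in Set.Ioi t, phi b s :=
    setIntegral_nonneg measurableSet_Ioi (fun s _ => phi_nonneg hb s)
  linarith

/-- Tail ratio: 1 − Φ(t+h) ≥ e^{-bh}(1 − Φ(t)). -/
lemma tail_ratio (hb : 2 ≤ b) {t h : ℝ} (hh : 0 ≤ h) :
    Real.exp (-(b:ℝ) * h) * (1 - Phi b t) ≤ 1 - Phi b (t + h) := by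
  rw [one_sub_Phi_eq hb, one_sub_Phi_eq hb]
  have hshift : ∫ s in Set.Ioi (t + h), phi b s = ∫ s in Set.Ioi t, phi b (s + h) := by
    rw [← integral_indicator measurableSet_Ioi, ← integral_indicator measurableSet_Ioi]
    rw [← integral_add_right_eq_self (fun x => (Set.Ioi (t + h)).indicator (phi b) x) h]
    congr 1
    ext x
    by_cases hx : x ∈ Set.Ioi t
    · have : x + h ∈ Set.Ioi (t + h) := by simp only [Set.mem_Ioi] at hx ⊢; linarith
      rw [Set.indicator_of_mem hx, Set.indicator_of_mem this]
    · have : x + h ∉ Set.Ioi (t + h) := by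
        simp only [Set.mem_Ioi] at hx ⊢; push_neg at hx ⊢; linarith
      rw [Set.indicator_of_notMem hx, Set.indicator_of_notMem this]
  rw [hshift, ← integral_const_mul]
  apply setIntegral_mono_on
  · exact (((phi_integrable hb).integrableOn).const_mul _)
  · have : IntegrableOn (fun s => phi b (s + h)) (Set.Ioi t) := by
      have := (phi_integrable hb).comp_add_right h
      exact this.integrableOn
    exact this
  · exact measurableSet_Ioi
  · exact fun x _ => phi_ratio hb hh

lemma Phi_measurable (hb : 2 ≤ b) : Measurable (Phi b) := by
  have hmono : Monotone (Phi b) := by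
    intro t₁ t₂ hle
    apply setIntegral_mono_set ((phi_integrable hb).integrableOn)
    · exact Filter.Eventually.of_forall (fun s => phi_nonneg hb s)
    · exact HasSubset.Subset.eventuallyLE (Set.Iic_subset_Iic.2 hle)
  exact hmono.measurable

lemma integrand_integrable (hb : 2 ≤ b) (μ : Measure ℝ) [IsProbabilityMeasure μ] (s : ℝ) :
    Integrable (fun s' => 1 - Phi b (s - s')) μ := by
  apply Integrable.mono' (integrable_const (1:ℝ))
  · exact (measurable_const.sub ((Phi_measurable hb).comp
      (measurable_const.sub measurable_id))).aestronglyMeasurable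
  · apply Filter.Eventually.of_forall
    intro x
    rw [Real.norm_eq_abs, abs_le]
    constructor
    · have := Phi_le_one hb (s - x); linarith
    · have := Phi_nonneg hb (s - x); linarith

end Aux

theorem convolved_tail_ratio_bound (b : ℤ) (hb : 2 ≤ b)
    (μ : Measure ℝ) [IsProbabilityMeasure μ] (hμ : μ (Set.Iio 0) = 0) :
    ∀ s h : ℝ, 0 ≤ s → 0 ≤ h → h ≤ 1 / (b : ℝ) ^ 3 →
      0 < Hbar b μ s →
        Hbar b μ (s + h) / Hbar b μ s ≥ Real.exp (-1 / (b : ℝ) ^ 2) ∧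
        Real.exp (-1 / (b : ℝ) ^ 2) ≥ 1 / 2 := by
  intro s h hs hh hhb hpos
  have hB : (2 : ℝ) ≤ (b : ℝ) := by exact_mod_cast hb
  have hB0 : (0:ℝ) < (b:ℝ) := by linarith
  constructor
  · -- main ratio bound
    have hkey : Real.exp (-(b:ℝ) * h) * Hbar b μ s ≤ Hbar b μ (s + h) := by
      unfold Hbar
      rw [← integral_const_mul]
      apply integral_mono
      · exact (integrand_integrable hb μ s).const_mul _
      · exact integrand_integrable hb μ (s + h)
      · intro x
        have := tail_ratio hb (t := s - x) hh
        simpa [show s - x + h = s + h - x by ring] using this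
    have hexp : Real.exp (-1 / (b:ℝ) ^ 2) ≤ Real.exp (-(b:ℝ) * h) := by
      apply Real.exp_le_exp.2
      have hbh : (b:ℝ) * h ≤ 1 / (b:ℝ) ^ 2 := by
        have : (b:ℝ) * h ≤ (b:ℝ) * (1 / (b:ℝ) ^ 3) :=
          mul_le_mul_of_nonneg_left hhb (le_of_lt hB0)
        calc (b:ℝ) * h ≤ (b:ℝ) * (1 / (b:ℝ) ^ 3) := this
          _ = 1 / (b:ℝ) ^ 2 := by field_simp
      have hneg : -1 / (b:ℝ) ^ 2 = -(1 / (b:ℝ) ^ 2) := by ring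
      rw [hneg]
      linarith
    rw [ge_iff_le, le_div_iff₀ hpos]
    calc Real.exp (-1 / (b:ℝ) ^ 2) * Hbar b μ s
        ≤ Real.exp (-(b:ℝ) * h) * Hbar b μ s :=
          mul_le_mul_of_nonneg_right hexp (le_of_lt hpos)
      _ ≤ Hbar b μ (s + h) := hkey
  · -- exp(-1/b²) ≥ 1/2
    have h1 : (1:ℝ) / (b:ℝ) ^ 2 ≤ 1 / 4 := by
      apply div_le_div_of_nonneg_left (by norm_num) (by norm_num)
      nlinarith
    have h2 := Real.add_one_le_exp (-1 / (b:ℝ) ^ 2)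
    have h3 : -1 / (b:ℝ) ^ 2 = -(1 / (b:ℝ) ^ 2) := by ring
    rw [h3] at h2
    rw [ge_iff_le, h3]
    linarith
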